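/- For all natural numbers s ≥ 2 and t ≥ 2, the bidegree (4, 4 + n_{s,t,1}) component E^{4, 2^{s+t+1}+2^{s+t}+2^s+1} of E is the zero vector space. -/

import Mathlib

noncomputable section

open MvPolynomial

/-- Generators of Chen's algebra `E` in homological degrees ≤ 4.
Here `g i` denotes the generator `g_{i+1}` (the family `g` starts at index 1). -/
inductive Gen : Type
  | h (i : ℕ)
  | c (i : ℕ)
  | d (i : ℕ)
  | e (i : ℕ)
  | f (i : ℕ)
  | g (i : ℕ)
  | p (i : ℕ)
  | D3 (i : ℕ)
  | p' (i : ℕ)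

/-- Homological degree of the generators. -/
def hdeg : Gen → ℕ
  | .h _ => 1
  | .c _ => 3
  | _ => 4

/-- Internal degree of the generators. -/
def ideg : Gen → ℕ
  | .h i => 2 ^ i
  | .c i => 2 ^ (i + 3) + 2 ^ (i + 1) + 2 ^ i
  | .d i => 2 ^ (i + 4) + 2 ^ (i + 1)
  | .e i => 2 ^ (i + 4) + 2 ^ (i + 2) + 2 ^ i
  | .f i => 2 ^ (i + 4) + 2 ^ (i + 2) + 2 ^ (i + 1)
  | .g i => 2 ^ (i + 4) + 2 ^ (i + 3)      -- internal degree of `g_{i+1}`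
  | .p i => 2 ^ (i + 5) + 2 ^ (i + 2) + 2 ^ i
  | .D3 i => 2 ^ (i + 6) + 2 ^ i
  | .p' i => 2 ^ (i + 6) + 2 ^ (i + 3) + 2 ^ i

abbrev P := MvPolynomial Gen (ZMod 2)

/-- Chen's relations in homological degrees ≤ 4:
`hᵢhᵢ₊₁ = 0`, `hᵢhᵢ₊₂² = 0`, `hᵢ²hᵢ₊₃² = 0`, `hᵢ³ = hᵢ₋₁²hᵢ₊₁` (i ≥ 1), and
`hⱼcᵢ = 0` for `j ∈ {i-1, i, i+2, i+3}`. -/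
def rels : Set P :=
  ⋃ i : ℕ,
    ({ X (Gen.h i) * X (Gen.h (i + 1)),
       X (Gen.h i) * X (Gen.h (i + 2)) ^ 2,
       X (Gen.h i) ^ 2 * X (Gen.h (i + 3)) ^ 2,
       X (Gen.h (i + 1)) ^ 3 - X (Gen.h i) ^ 2 * X (Gen.h (i + 2)),
       X (Gen.h i) * X (Gen.c (i + 1)),
       X (Gen.h i) * X (Gen.c i),
       X (Gen.h (i + 2)) * X (Gen.c i),
       X (Gen.h (i + 3)) * X (Gen.c i) } : Set P)

def relIdeal : Ideal P := Ideal.span rels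

/-- Chen's algebra `E`, isomorphic to `Ext_A^{k,*}(ℤ/2, ℤ/2)` in homological degrees `k ≤ 4`. -/
abbrev E := P ⧸ relIdeal

def mkE : P →ₐ[ZMod 2] E := Ideal.Quotient.mkₐ (ZMod 2) relIdeal

/-- The bidegree `(k, d)` component `E^{k,d}` of `E`: the image of the space of polynomials
that are weighted homogeneous of homological degree `k` and internal degree `d`. -/
def component (k d : ℕ) : Submodule (ZMod 2) E :=
  Submodule.map mkE.toLinearMap
    (weightedHomogeneousSubmodule (ZMod 2) hdeg k ⊓
      weightedHomogeneousSubmodule (ZMod 2) ideg d)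

/-- `n_{s,t,u} = 2^{s+t+u} + 2^{s+t} + 2^s - 3`. -/
def nstu (s t u : ℕ) : ℕ := 2 ^ (s + t + u) + 2 ^ (s + t) + 2 ^ s - 3

lemma two_pow_mod_two {n : ℕ} (h : 1 ≤ n) : 2 ^ n % 2 = 0 := by
  obtain ⟨m, rfl⟩ : ∃ m, n = m + 1 := ⟨n - 1, by omega⟩
  have : 2 ^ (m + 1) = 2 ^ m * 2 := by ring
  omega

lemma two_pow_mod_four {n : ℕ} (h : 2 ≤ n) : 2 ^ n % 4 = 0 := by
  obtain ⟨m, rfl⟩ : ∃ m, n = m + 2 := ⟨n - 2, by omega⟩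
  have : 2 ^ (m + 2) = 2 ^ m * 4 := by ring
  omega

lemma two_pow_le {m n : ℕ} (h : m ≤ n) : 2 ^ m ≤ 2 ^ n :=
  Nat.pow_le_pow_right (by norm_num) h

lemma pow_mul_odd_inj_le {a b x y : ℕ} (hab : a ≤ b) (hx : x % 2 = 1) (_hy : y % 2 = 1)
    (h : 2 ^ a * x = 2 ^ b * y) : a = b ∧ x = y := by
  obtain ⟨k, rfl⟩ : ∃ k, b = a + k := ⟨b - a, by omega⟩
  rw [pow_add, mul_assoc] at h
  have hx' : x = 2 ^ k * y := Nat.eq_of_mul_eq_mul_left (Nat.two_pow_pos a) h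
  rcases Nat.eq_zero_or_pos k with rfl | hk
  · constructor
    · omega
    · simpa using hx'
  · exfalso
    have h2 : 2 ^ k % 2 = 0 := two_pow_mod_two hk
    have : x % 2 = 0 := by rw [hx', Nat.mul_mod, h2]; simp
    omega

lemma pow_mul_odd_inj {a b x y : ℕ} (hx : x % 2 = 1) (hy : y % 2 = 1)
    (h : 2 ^ a * x = 2 ^ b * y) : a = b ∧ x = y := by
  rcases le_total a b with hab | hab
  · exact pow_mul_odd_inj_le hab hx hy h
  · obtain ⟨h1, h2⟩ := pow_mul_odd_inj_le hab hy hx h.symm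
    exact ⟨h1.symm, h2.symm⟩

lemma no_pow_eq_3mul {a b : ℕ} (h : 2 ^ a = 2 ^ b * 3) : False := by
  have := pow_mul_odd_inj (x := 1) (y := 3) (by norm_num) (by norm_num)
    (by rw [mul_one]; exact h)
  omega

lemma keyB_sorted {s t x y z : ℕ} (hs : 2 ≤ s) (ht : 2 ≤ t) (hxy : x ≤ y) (hyz : y ≤ z)
    (h : 2 ^ x + 2 ^ y + 2 ^ z = 2 ^ (s + t + 1) + 2 ^ (s + t) + 2 ^ s) :
    x = s ∧ y = s + t ∧ z = s + t + 1 := by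
  have hO : 2 ^ (s + t + 1) + 2 ^ (s + t) + 2 ^ s
      = 2 ^ s * (2 ^ (t + 1) + 2 ^ t + 1) := by ring
  have hOodd : (2 ^ (t + 1) + 2 ^ t + 1) % 2 = 1 := by
    have h1 := two_pow_mod_two (n := t + 1) (by omega)
    have h2 := two_pow_mod_two (n := t) (by omega)
    omega
  have hO13 : 13 ≤ 2 ^ (t + 1) + 2 ^ t + 1 := by
    have h1 := two_pow_le (show 3 ≤ t + 1 by omega)
    have h2 := two_pow_le (show 2 ≤ t by omega)
    norm_num at h1 h2; omega
  rw [hO] at h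
  rcases hxy.eq_or_lt with rfl | hxy'
  · -- x = y
    rcases hyz.eq_or_lt with rfl | hyz'
    · -- all equal: 3 * 2^x
      exfalso
      have key : 2 ^ x * 3 = 2 ^ s * (2 ^ (t + 1) + 2 ^ t + 1) := by omega
      obtain ⟨e1, e2⟩ := pow_mul_odd_inj (by norm_num) hOodd key
      omega
    · -- x = y < z
      exfalso
      rcases (show z = x + 1 ∨ x + 2 ≤ z by omega) with rfl | hz2
      · have hpow : 2 ^ (x + 2) = 2 ^ x + 2 ^ x + 2 ^ (x + 1) := by ring
        have key : 2 ^ (x + 2) * 1 = 2 ^ s * (2 ^ (t + 1) + 2 ^ t + 1) := by omega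
        obtain ⟨e1, e2⟩ := pow_mul_odd_inj (by norm_num) hOodd key
        omega
      · have hz : 2 ^ z = 2 ^ (x + 1) * 2 ^ (z - (x + 1)) := by
          rw [← pow_add]; congr 1; omega
        have hx1 : 2 ^ (x + 1) = 2 ^ x + 2 ^ x := by ring
        have key : 2 ^ (x + 1) * (1 + 2 ^ (z - (x + 1))) = 2 ^ s * (2 ^ (t + 1) + 2 ^ t + 1) := by
          have : 2 ^ (x + 1) * (1 + 2 ^ (z - (x + 1))) = 2 ^ (x + 1) + 2 ^ z := by
            rw [hz]; ring
          omega
        have hodd : (1 + 2 ^ (z - (x + 1))) % 2 = 1 := by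
          have := two_pow_mod_two (n := z - (x + 1)) (by omega); omega
        obtain ⟨e1, e2⟩ := pow_mul_odd_inj hodd hOodd key
        exact no_pow_eq_3mul (a := z - (x + 1)) (b := t) (by omega)
  · -- x < y
    rcases hyz.eq_or_lt with rfl | hyz'
    · -- x < y = z
      exfalso
      have hy1 : 2 ^ (y + 1) = 2 ^ y + 2 ^ y := by ring
      have hy2 : 2 ^ (y + 1) = 2 ^ x * 2 ^ (y + 1 - x) := by
        rw [← pow_add]; congr 1; omega
      have key : 2 ^ x * (1 + 2 ^ (y + 1 - x)) = 2 ^ s * (2 ^ (t + 1) + 2 ^ t + 1) := by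
        have : 2 ^ x * (1 + 2 ^ (y + 1 - x)) = 2 ^ x + 2 ^ (y + 1) := by rw [hy2]; ring
        omega
      have hodd : (1 + 2 ^ (y + 1 - x)) % 2 = 1 := by
        have := two_pow_mod_two (n := y + 1 - x) (by omega); omega
      obtain ⟨e1, e2⟩ := pow_mul_odd_inj hodd hOodd key
      exact no_pow_eq_3mul (a := y + 1 - x) (b := t) (by omega)
    · -- x < y < z
      have hyx : 2 ^ y = 2 ^ x * 2 ^ (y - x) := by rw [← pow_add]; congr 1; omega
      have hzx : 2 ^ z = 2 ^ x * 2 ^ (z - x) := by rw [← pow_add]; congr 1; omega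
      have key : 2 ^ x * (1 + 2 ^ (y - x) + 2 ^ (z - x))
          = 2 ^ s * (2 ^ (t + 1) + 2 ^ t + 1) := by
        have : 2 ^ x * (1 + 2 ^ (y - x) + 2 ^ (z - x)) = 2 ^ x + 2 ^ y + 2 ^ z := by
          rw [hyx, hzx]; ring
        omega
      have hodd : (1 + 2 ^ (y - x) + 2 ^ (z - x)) % 2 = 1 := by
        have h1 := two_pow_mod_two (n := y - x) (by omega)
        have h2 := two_pow_mod_two (n := z - x) (by omega)
        omega
      obtain ⟨e1, e2⟩ := pow_mul_odd_inj hodd hOodd key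
      -- now 2^(y-x) + 2^(z-x) = 2^(t+1) + 2^t = 2^t * 3
      have hzy : 2 ^ (z - x) = 2 ^ (y - x) * 2 ^ (z - y) := by
        rw [← pow_add]; congr 1; omega
      have key2 : 2 ^ (y - x) * (1 + 2 ^ (z - y)) = 2 ^ t * 3 := by
        have h3 : 2 ^ (y - x) * (1 + 2 ^ (z - y)) = 2 ^ (y - x) + 2 ^ (z - x) := by
          rw [hzy]; ring
        have h4 : 2 ^ (t + 1) = 2 ^ t * 2 := by ring
        omega
      have hodd2 : (1 + 2 ^ (z - y)) % 2 = 1 := by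
        have := two_pow_mod_two (n := z - y) (by omega); omega
      obtain ⟨e3, e4⟩ := pow_mul_odd_inj hodd2 (by norm_num) key2
      have e5 : 2 ^ (z - y) = 2 ^ 1 := by omega
      have e6 : z - y = 1 := Nat.pow_right_injective (le_refl 2) e5
      omega

lemma keyB' {s t x y z : ℕ} (hs : 2 ≤ s) (ht : 2 ≤ t)
    (h : 2 ^ x + 2 ^ y + 2 ^ z = 2 ^ (s + t + 1) + 2 ^ (s + t) + 2 ^ s) :
    (x = s + t ∨ y = s + t ∨ z = s + t) ∧
    (x = s + t + 1 ∨ y = s + t + 1 ∨ z = s + t + 1) := by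
  rcases le_total x y with h1 | h1 <;> rcases le_total y z with h2 | h2 <;>
    rcases le_total x z with h3 | h3
  · obtain ⟨e1, e2, e3⟩ := keyB_sorted hs ht h1 h2 (by omega); omega
  · obtain ⟨e1, e2, e3⟩ := keyB_sorted hs ht h1 h2 (by omega); omega
  · obtain ⟨e1, e2, e3⟩ := keyB_sorted hs ht h3 h2 (by omega); omega
  · obtain ⟨e1, e2, e3⟩ := keyB_sorted hs ht h3 h1 (by omega); omega
  · obtain ⟨e1, e2, e3⟩ := keyB_sorted hs ht h1 h3 (by omega); omega
  · obtain ⟨e1, e2, e3⟩ := keyB_sorted hs ht h2 h3 (by omega); omega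
  · obtain ⟨e1, e2, e3⟩ := keyB_sorted hs ht h2 h1 (by omega); omega
  · obtain ⟨e1, e2, e3⟩ := keyB_sorted hs ht h2 h1 (by omega); omega

lemma keyC' {s t a b c e : ℕ} (hs : 2 ≤ s) (ht : 2 ≤ t)
    (h : 2 ^ a + 2 ^ b + 2 ^ c + 2 ^ e = 2 ^ (s + t + 1) + 2 ^ (s + t) + 2 ^ s + 1) :
    (a = s + t ∨ b = s + t ∨ c = s + t ∨ e = s + t) ∧
    (a = s + t + 1 ∨ b = s + t + 1 ∨ c = s + t + 1 ∨ e = s + t + 1) := by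
  have pz : ∀ n : ℕ, n = 0 ∨ 2 ^ n % 2 = 0 := by
    intro n
    rcases Nat.eq_zero_or_pos n with rfl | hn
    · left; rfl
    · right; exact two_pow_mod_two hn
  have hz : a = 0 ∨ b = 0 ∨ c = 0 ∨ e = 0 := by
    have pa := pz a; have pb := pz b; have pc := pz c; have pe := pz e
    have p1 := two_pow_mod_two (n := s + t + 1) (by omega)
    have p2 := two_pow_mod_two (n := s + t) (by omega)
    have p3 := two_pow_mod_two (n := s) (by omega)
    omega
  rcases hz with rfl | rfl | rfl | rfl
  · obtain ⟨m1, m2⟩ := keyB' (x := b) (y := c) (z := e) hs ht (by simp at h ⊢; omega)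
    omega
  · obtain ⟨m1, m2⟩ := keyB' (x := a) (y := c) (z := e) hs ht (by simp at h ⊢; omega)
    omega
  · obtain ⟨m1, m2⟩ := keyB' (x := a) (y := b) (z := e) hs ht (by simp at h ⊢; omega)
    omega
  · obtain ⟨m1, m2⟩ := keyB' (x := a) (y := b) (z := c) hs ht (by simp at h ⊢; omega)
    omega

section Helpers

lemma hdeg_cases (x : Gen) : hdeg x = 1 ∨ hdeg x = 3 ∨ hdeg x = 4 := by
  cases x <;> simp [hdeg]

lemma hdeg_eq_one {x : Gen} (h : hdeg x = 1) : ∃ i, x = Gen.h i := by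
  cases x <;> simp_all [hdeg]

lemma weight_single (w : Gen → ℕ) (a : Gen) (n : ℕ) :
    Finsupp.weight w (Finsupp.single a n) = n * w a := by
  rw [Finsupp.weight_apply, Finsupp.sum_single_index] <;> simp

lemma weight_eq_sum (w : Gen → ℕ) (σ : Gen →₀ ℕ) :
    ((Finsupp.toMultiset σ).map w).sum = Finsupp.weight w σ := by
  induction σ using Finsupp.induction with
  | zero => simp
  | single_add a n f _ _ ih =>
    rw [Finsupp.toMultiset_add, Multiset.map_add, Multiset.sum_add, map_add, ih,
      Finsupp.toMultiset_single, weight_single]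
    congr 1
    have : ∀ m : ℕ, (Multiset.map w (m • ({a} : Multiset Gen))).sum = m * w a := by
      intro m
      induction m with
      | zero => simp
      | succ k ihk => rw [succ_nsmul, Multiset.map_add, Multiset.sum_add, ihk]; simp; ring
    exact this n

lemma count_ge (σ : Gen →₀ ℕ) (l : List Gen) (hl : (l : Multiset Gen) = Finsupp.toMultiset σ)
    (x : Gen) (hx : x ∈ l) : 1 ≤ σ x := by
  classical
  have h1 : 1 ≤ Multiset.count x (Finsupp.toMultiset σ) := by
    rw [← hl]
    exact Multiset.one_le_count_iff_mem.mpr (by simpa using hx)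
  rwa [Finsupp.count_toMultiset] at h1

lemma rel_mem (i : ℕ) : X (Gen.h i) * X (Gen.h (i + 1)) ∈ rels := by
  refine Set.mem_iUnion.mpr ⟨i, ?_⟩
  simp [Set.mem_insert_iff]

lemma monomial_mem {n : ℕ} (σ : Gen →₀ ℕ) (coef : ZMod 2)
    (h1 : 1 ≤ σ (Gen.h n)) (h2 : 1 ≤ σ (Gen.h (n + 1))) :
    monomial σ coef ∈ relIdeal := by
  classical
  set σ' := σ - Finsupp.single (Gen.h n) 1 - Finsupp.single (Gen.h (n + 1)) 1 with hσ'
  have hdecomp : σ' + Finsupp.single (Gen.h n) 1 + Finsupp.single (Gen.h (n + 1)) 1 = σ := by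
    ext x
    simp only [hσ', Finsupp.add_apply, Finsupp.tsub_apply, Finsupp.single_apply]
    rcases eq_or_ne (Gen.h n) x with rfl | hx1
    · rw [if_pos rfl, if_neg (by simp)]
      omega
    · rcases eq_or_ne (Gen.h (n + 1)) x with rfl | hx2
      · rw [if_pos rfl, if_neg hx1]
        omega
      · rw [if_neg hx1, if_neg hx2]
        omega
  have key : monomial σ coef = monomial σ' coef * (X (Gen.h n) * X (Gen.h (n + 1))) := by
    rw [X, X, monomial_mul, monomial_mul, mul_one, mul_one, ← add_assoc, hdecomp]
  rw [key]
  exact Ideal.mul_mem_left _ _ (Ideal.subset_span (rel_mem n))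

end Helpers

lemma hc_contra {s t i j : ℕ} (hs : 2 ≤ s) (ht : 2 ≤ t)
    (h : 2 ^ j + (2 ^ (i + 3) + 2 ^ (i + 1) + 2 ^ i)
      = 2 ^ (s + t + 1) + 2 ^ (s + t) + 2 ^ s + 1) : False := by
  have hlow1 : 32 ≤ 2 ^ (s + t + 1) := by
    have := two_pow_le (show 5 ≤ s + t + 1 by omega); norm_num at this; omega
  have hlow2 : 16 ≤ 2 ^ (s + t) := by
    have := two_pow_le (show 4 ≤ s + t by omega); norm_num at this; omega
  have hlow3 : 4 ≤ 2 ^ s := by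
    have := two_pow_le (show 2 ≤ s by omega); norm_num at this; omega
  have q1 := two_pow_mod_four (n := s + t + 1) (by omega)
  have q2 := two_pow_mod_four (n := s + t) (by omega)
  have q3 := two_pow_mod_four (n := s) (by omega)
  rcases Nat.eq_zero_or_pos i with rfl | hi
  · norm_num at h
    have hj : 2 ^ j = 1 ∨ 2 ^ j = 2 ∨ 2 ^ j % 4 = 0 := by
      match j with
      | 0 => exact Or.inl rfl
      | 1 => exact Or.inr (Or.inl rfl)
      | (k + 2) => exact Or.inr (Or.inr (two_pow_mod_four (by omega)))
    omega
  · obtain ⟨k, rfl⟩ : ∃ k, i = k + 1 := ⟨i - 1, by omega⟩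
    rcases Nat.eq_zero_or_pos j with rfl | hj
    · have hfac : 2 ^ (k + 1) * 11 = 2 ^ s * (2 ^ (t + 1) + 2 ^ t + 1) := by
        have h1 : 2 ^ (k + 1 + 3) + 2 ^ (k + 1 + 1) + 2 ^ (k + 1) = 2 ^ (k + 1) * 11 := by
          ring
        have h2 : 2 ^ (s + t + 1) + 2 ^ (s + t) + 2 ^ s
            = 2 ^ s * (2 ^ (t + 1) + 2 ^ t + 1) := by ring
        have h0 : (2 : ℕ) ^ 0 = 1 := rfl
        omega
      have hOodd : (2 ^ (t + 1) + 2 ^ t + 1) % 2 = 1 := by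
        have e1 := two_pow_mod_two (n := t + 1) (by omega)
        have e2 := two_pow_mod_two (n := t) (by omega)
        omega
      obtain ⟨e1, e2⟩ := pow_mul_odd_inj (by norm_num) hOodd hfac
      have e3 := two_pow_le (show 2 ≤ t by omega)
      have e4 := two_pow_le (show 3 ≤ t + 1 by omega)
      norm_num at e3 e4
      omega
    · obtain ⟨m, rfl⟩ : ∃ m, j = m + 1 := ⟨j - 1, by omega⟩
      have e1 := two_pow_mod_two (n := m + 1) (by omega)
      have e2 := two_pow_mod_two (n := k + 1 + 3) (by omega)
      have e3 := two_pow_mod_two (n := k + 1 + 1) (by omega)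
      have e4 := two_pow_mod_two (n := k + 1) (by omega)
      omega


lemma shape {s t : ℕ} (hs : 2 ≤ s) (ht : 2 ≤ t) (σ : Gen →₀ ℕ) (coef : ZMod 2)
    (h4 : Finsupp.weight hdeg σ = 4)
    (hD : Finsupp.weight ideg σ = 2 ^ (s + t + 1) + 2 ^ (s + t) + 2 ^ s + 1) :
    monomial σ coef ∈ relIdeal := by
  classical
  obtain ⟨l, hl⟩ := Quotient.exists_rep (Finsupp.toMultiset σ)
  rw [show (Quotient.mk _ l : Multiset Gen) = (l : Multiset Gen) from rfl] at hl
  have hsum1 : (l.map hdeg).sum = 4 := by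
    rw [← Multiset.sum_coe, ← Multiset.map_coe, hl, weight_eq_sum, h4]
  have hsum2 : (l.map ideg).sum = 2 ^ (s + t + 1) + 2 ^ (s + t) + 2 ^ s + 1 := by
    rw [← Multiset.sum_coe, ← Multiset.map_coe, hl, weight_eq_sum, hD]
  have hlow1 : 32 ≤ 2 ^ (s + t + 1) := by
    have := two_pow_le (show 5 ≤ s + t + 1 by omega); norm_num at this; omega
  have hlow2 : 16 ≤ 2 ^ (s + t) := by
    have := two_pow_le (show 4 ≤ s + t by omega); norm_num at this; omega
  have hlow3 : 4 ≤ 2 ^ s := by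
    have := two_pow_le (show 2 ≤ s by omega); norm_num at this; omega
  match l, hsum1, hsum2, hl with
  | [], hsum1, hsum2, hl => simp at hsum1
  | [x1], hsum1, hsum2, hl =>
    exfalso
    simp only [List.map_cons, List.map_nil, List.sum_cons, List.sum_nil, add_zero]
      at hsum1 hsum2
    have p1 := two_pow_mod_two (n := s + t + 1) (by omega)
    have p2 := two_pow_mod_two (n := s + t) (by omega)
    have p3 := two_pow_mod_two (n := s) (by omega)
    have hrel : 2 ^ (s + t + 1) = 2 * 2 ^ (s + t) := by rw [pow_succ]; ring
    have h32 : (2 : ℕ) ^ 5 = 32 := by norm_num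
    cases x1 with
    | h i => simp [hdeg] at hsum1
    | c i => simp [hdeg] at hsum1
    | d i =>
      simp only [ideg] at hsum2
      have e1 := two_pow_mod_two (n := i + 4) (by omega)
      have e2 := two_pow_mod_two (n := i + 1) (by omega)
      omega
    | e i =>
      simp only [ideg] at hsum2
      rcases Nat.eq_zero_or_pos i with rfl | hi
      · norm_num at hsum2; omega
      · obtain ⟨k, rfl⟩ : ∃ k, i = k + 1 := ⟨i - 1, by omega⟩
        have e1 := two_pow_mod_two (n := k + 1 + 4) (by omega)
        have e2 := two_pow_mod_two (n := k + 1 + 2) (by omega)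
        have e3 := two_pow_mod_two (n := k + 1) (by omega)
        omega
    | f i =>
      simp only [ideg] at hsum2
      have e1 := two_pow_mod_two (n := i + 4) (by omega)
      have e2 := two_pow_mod_two (n := i + 2) (by omega)
      have e3 := two_pow_mod_two (n := i + 1) (by omega)
      omega
    | g i =>
      simp only [ideg] at hsum2
      have e1 := two_pow_mod_two (n := i + 4) (by omega)
      have e2 := two_pow_mod_two (n := i + 3) (by omega)
      omega
    | p i =>
      simp only [ideg] at hsum2
      rcases Nat.eq_zero_or_pos i with rfl | hi
      · norm_num at hsum2; omega
      · obtain ⟨k, rfl⟩ : ∃ k, i = k + 1 := ⟨i - 1, by omega⟩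
        have e1 := two_pow_mod_two (n := k + 1 + 5) (by omega)
        have e2 := two_pow_mod_two (n := k + 1 + 2) (by omega)
        have e3 := two_pow_mod_two (n := k + 1) (by omega)
        omega
    | D3 i =>
      simp only [ideg] at hsum2
      rcases Nat.eq_zero_or_pos i with rfl | hi
      · norm_num at hsum2
        have hup : 2 ^ (s + t) < 2 ^ 5 := by omega
        have hst : s + t < 5 := (Nat.pow_lt_pow_iff_right one_lt_two).mp hup
        obtain ⟨rfl, rfl⟩ : s = 2 ∧ t = 2 := by omega
        norm_num at hsum2
      · obtain ⟨k, rfl⟩ : ∃ k, i = k + 1 := ⟨i - 1, by omega⟩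
        have e1 := two_pow_mod_two (n := k + 1 + 6) (by omega)
        have e2 := two_pow_mod_two (n := k + 1) (by omega)
        omega
    | p' i =>
      simp only [ideg] at hsum2
      rcases Nat.eq_zero_or_pos i with rfl | hi
      · norm_num at hsum2
        have hup : 2 ^ (s + t) < 2 ^ 5 := by omega
        have hst : s + t < 5 := (Nat.pow_lt_pow_iff_right one_lt_two).mp hup
        obtain ⟨rfl, rfl⟩ : s = 2 ∧ t = 2 := by omega
        norm_num at hsum2
      · obtain ⟨k, rfl⟩ : ∃ k, i = k + 1 := ⟨i - 1, by omega⟩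
        have e1 := two_pow_mod_two (n := k + 1 + 6) (by omega)
        have e2 := two_pow_mod_two (n := k + 1 + 3) (by omega)
        have e3 := two_pow_mod_two (n := k + 1) (by omega)
        omega
  | [x1, x2], hsum1, hsum2, hl =>
    exfalso
    simp only [List.map_cons, List.map_nil, List.sum_cons, List.sum_nil, add_zero]
      at hsum1 hsum2
    cases x1 <;> cases x2 <;> simp only [hdeg] at hsum1 <;> try omega
    case h.c j i =>
      simp only [ideg] at hsum2
      exact hc_contra (i := i) (j := j) hs ht (by omega)
    case c.h i j =>
      simp only [ideg] at hsum2
      exact hc_contra (i := i) (j := j) hs ht (by omega)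
  | [x1, x2, x3], hsum1, hsum2, hl =>
    exfalso
    have c1 := hdeg_cases x1; have c2 := hdeg_cases x2; have c3 := hdeg_cases x3
    simp only [List.map_cons, List.map_nil, List.sum_cons, List.sum_nil] at hsum1
    omega
  | x1 :: x2 :: x3 :: x4 :: x5 :: rest, hsum1, hsum2, hl =>
    exfalso
    have c1 := hdeg_cases x1; have c2 := hdeg_cases x2; have c3 := hdeg_cases x3
    have c4 := hdeg_cases x4; have c5 := hdeg_cases x5
    simp only [List.map_cons, List.sum_cons] at hsum1
    omega
  | [x1, x2, x3, x4], hsum1, hsum2, hl =>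
    have c1 := hdeg_cases x1; have c2 := hdeg_cases x2; have c3 := hdeg_cases x3
    have c4 := hdeg_cases x4
    simp only [List.map_cons, List.map_nil, List.sum_cons, List.sum_nil] at hsum1 hsum2
    obtain ⟨a, rfl⟩ := hdeg_eq_one (show hdeg x1 = 1 by omega)
    obtain ⟨b, rfl⟩ := hdeg_eq_one (show hdeg x2 = 1 by omega)
    obtain ⟨c, rfl⟩ := hdeg_eq_one (show hdeg x3 = 1 by omega)
    obtain ⟨e, rfl⟩ := hdeg_eq_one (show hdeg x4 = 1 by omega)
    simp only [ideg] at hsum2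
    obtain ⟨m1, m2⟩ := keyC' hs ht (show 2 ^ a + 2 ^ b + 2 ^ c + 2 ^ e
      = 2 ^ (s + t + 1) + 2 ^ (s + t) + 2 ^ s + 1 by omega)
    have hm1 : 1 ≤ σ (Gen.h (s + t)) := by
      refine count_ge σ _ hl _ ?_
      rcases m1 with rfl | rfl | rfl | rfl <;> simp
    have hm2 : 1 ≤ σ (Gen.h (s + t + 1)) := by
      refine count_ge σ _ hl _ ?_
      rcases m2 with rfl | rfl | rfl | rfl <;> simp
    exact monomial_mem σ coef hm1 hm2

/-- For all `s ≥ 2` and `t ≥ 2`, the component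
`E^{4, 4 + n_{s,t,1}} = E^{4, 2^{s+t+1}+2^{s+t}+2^s+1}` is zero. -/
theorem stmt7 (s t : ℕ) (hs : 2 ≤ s) (ht : 2 ≤ t) :
    component 4 (2 ^ (s + t + 1) + 2 ^ (s + t) + 2 ^ s + 1) = ⊥ := by
  rw [component, eq_bot_iff]
  rintro x ⟨p, hp, rfl⟩
  obtain ⟨hp1, hp2⟩ := hp
  have hw1 : p.IsWeightedHomogeneous hdeg 4 := hp1
  have hw2 : p.IsWeightedHomogeneous ideg (2 ^ (s + t + 1) + 2 ^ (s + t) + 2 ^ s + 1) := hp2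
  rw [Submodule.mem_bot]
  show mkE p = 0
  rw [mkE, Ideal.Quotient.mkₐ_eq_mk, Ideal.Quotient.eq_zero_iff_mem,
    ← p.support_sum_monomial_coeff]
  refine Ideal.sum_mem _ fun v hv => ?_
  exact shape hs ht v _ (hw1 (mem_support_iff.mp hv)) (hw2 (mem_support_iff.mp hv))
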